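/- (MGF bound for empirical posterior KL) Let μ = Σ_{a=1}^k ρ(a)μ_a be a fully supported mixture on a finite set, and let x_1,…,x_m be i.i.d. samples from μ. Let ρ_π̂ = (1/m)Σ_j ρ_{x_j} where ρ_x(a) = ρ(a)μ_a(x)/μ(x). Then for all 0 ≤ λ < m, E[exp(λ·KL(ρ_π̂ || ρ))] ≤ (1/(1−λ/m))^{k−1}, assuming the same MGF bound holds for the empirical distribution of m i.i.d. draws from ρ. -/
import Mathlib


open Finset

/-- KL divergence between two distributions on a finite type. -/
noncomputable def klDiv {T : Type*} [Fintype T] (p q : T → ℝ) : ℝ :=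
  ∑ a, p a * Real.log (p a / q a)

lemma klDiv_convexOn {k : ℕ} (ρ : Fin k → ℝ) (hρ0 : ∀ a, 0 ≤ ρ a) :
    ConvexOn ℝ {p : Fin k → ℝ | ∀ a, 0 ≤ p a ∧ (ρ a = 0 → p a = 0)}
      (fun p => klDiv p ρ) := by
  constructor
  · intro p hp q hq a b ha hb hab c
    refine ⟨?_, fun hc => ?_⟩
    · simp only [Pi.add_apply, Pi.smul_apply, smul_eq_mul]
      exact add_nonneg (mul_nonneg ha (hp c).1) (mul_nonneg hb (hq c).1)
    · simp [Pi.add_apply, Pi.smul_apply, smul_eq_mul, (hp c).2 hc, (hq c).2 hc]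
  · intro p hp q hq a b ha hb hab
    simp only [klDiv, smul_eq_mul]
    rw [Finset.mul_sum, Finset.mul_sum, ← Finset.sum_add_distrib]
    apply Finset.sum_le_sum
    intro c _
    simp only [Pi.add_apply, Pi.smul_apply, smul_eq_mul]
    rcases eq_or_ne (ρ c) 0 with hc | hc
    · simp [(hp c).2 hc, (hq c).2 hc]
    · have hρc : 0 < ρ c := lt_of_le_of_ne (hρ0 c) (Ne.symm hc)
      have hpc := (hp c).1
      have hqc := (hq c).1
      have key : ∀ t : ℝ, 0 ≤ t → t * Real.log (t / ρ c)
          = t * Real.log t - t * Real.log (ρ c) := by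
        intro t ht
        rcases eq_or_lt_of_le ht with h0 | h0
        · simp [← h0]
        · rw [Real.log_div h0.ne' hρc.ne', mul_sub]
      rw [key _ (add_nonneg (mul_nonneg ha hpc) (mul_nonneg hb hqc)), key _ hpc, key _ hqc]
      have := Real.convexOn_mul_log.2 (Set.mem_Ici.2 hpc) (Set.mem_Ici.2 hqc) ha hb hab
      simp only [smul_eq_mul] at this
      nlinarith [this]

/-- Jensen's inequality for `p ↦ exp (l * klDiv p ρ)`. -/
lemma jensen_exp_klDiv {k : ℕ} {ι : Type*} [Fintype ι]
    (ρ : Fin k → ℝ) (hρ0 : ∀ a, 0 ≤ ρ a)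
    (w : ι → ℝ) (p : ι → Fin k → ℝ)
    (hw0 : ∀ i, 0 ≤ w i) (hw1 : ∑ i, w i = 1)
    (hp : ∀ i, w i ≠ 0 → ∀ a, 0 ≤ p i a ∧ (ρ a = 0 → p i a = 0))
    (l : ℝ) (hl : 0 ≤ l) :
    Real.exp (l * klDiv (fun a => ∑ i, w i * p i a) ρ)
      ≤ ∑ i, w i * Real.exp (l * klDiv (p i) ρ) := by
  classical
  set t : Finset ι := Finset.univ.filter (fun i => w i ≠ 0) with ht
  have hmem : ∀ i ∈ t, p i ∈ {p : Fin k → ℝ | ∀ a, 0 ≤ p a ∧ (ρ a = 0 → p a = 0)} := by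
    intro i hi
    exact hp i (by simpa [ht] using hi)
  have hw1' : ∑ i ∈ t, w i = 1 := by
    rw [ht, Finset.sum_filter_ne_zero]
    exact hw1
  have hcenter : (fun a => ∑ i, w i * p i a) = ∑ i ∈ t, w i • p i := by
    funext a
    rw [Finset.sum_apply]
    simp only [Pi.smul_apply, smul_eq_mul]
    rw [ht]
    refine (Finset.sum_subset (Finset.filter_subset _ _) ?_).symm
    intro i _ hi
    have hwi : w i = 0 := by
      by_contra h
      exact hi (Finset.mem_filter.2 ⟨Finset.mem_univ i, h⟩)
    rw [hwi, zero_mul]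
  have h1 : klDiv (fun a => ∑ i, w i * p i a) ρ ≤ ∑ i ∈ t, w i * klDiv (p i) ρ := by
    rw [hcenter]
    exact (klDiv_convexOn ρ hρ0).map_sum_le (fun i _ => hw0 i) hw1' hmem
  have h2 : Real.exp (l * klDiv (fun a => ∑ i, w i * p i a) ρ)
      ≤ Real.exp (∑ i ∈ t, w i • (l * klDiv (p i) ρ)) := by
    apply Real.exp_le_exp.2
    simp only [smul_eq_mul]
    calc l * klDiv (fun a => ∑ i, w i * p i a) ρ
        ≤ l * ∑ i ∈ t, w i * klDiv (p i) ρ := mul_le_mul_of_nonneg_left h1 hl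
      _ = ∑ i ∈ t, w i * (l * klDiv (p i) ρ) := by
          rw [Finset.mul_sum]; apply Finset.sum_congr rfl; intros; ring
  have h3 : Real.exp (∑ i ∈ t, w i • (l * klDiv (p i) ρ))
      ≤ ∑ i ∈ t, w i * Real.exp (l * klDiv (p i) ρ) :=
    convexOn_exp.map_sum_le (fun i _ => hw0 i) hw1' (fun i _ => Set.mem_univ _)
  refine (h2.trans h3).trans ?_
  apply Finset.sum_le_sum_of_subset_of_nonneg (Finset.filter_subset _ _)
  intro i _ _
  exact mul_nonneg (hw0 i) (Real.exp_pos _).le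

theorem mgf_bound_empirical_posterior {Ω : Type*} [Fintype Ω] {k m : ℕ}
    (hk : 1 ≤ k) (hm : 0 < m)
    (ρ : Fin k → ℝ) (hρ0 : ∀ a, 0 ≤ ρ a) (hρ1 : ∑ a, ρ a = 1)
    (νa : Fin k → Ω → ℝ) (hνa0 : ∀ a x, 0 ≤ νa a x) (hνa1 : ∀ a, ∑ x, νa a x = 1)
    (hsupp : ∀ x, 0 < ∑ a, ρ a * νa a x)
    (l : ℝ) (hl0 : 0 ≤ l) (hlm : l < m)
    (hAgrawal : ∑ as : Fin m → Fin k, (∏ j, ρ (as j)) *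
        Real.exp (l * klDiv (fun a => (m : ℝ)⁻¹ * ∑ j, if as j = a then (1 : ℝ) else 0) ρ)
      ≤ (1 - l / m)⁻¹ ^ (k - 1)) :
    ∑ xs : Fin m → Ω, (∏ j, ∑ a, ρ a * νa a (xs j)) *
        Real.exp (l * klDiv
          (fun a => (m : ℝ)⁻¹ * ∑ j, ρ a * νa a (xs j) / ∑ b, ρ b * νa b (xs j)) ρ)
      ≤ (1 - l / m)⁻¹ ^ (k - 1) := by
  classical
  set μx : Ω → ℝ := fun x => ∑ b, ρ b * νa b x with hμx
  set q : Ω → Fin k → ℝ := fun x a => ρ a * νa a x / μx x with hq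
  have hμpos : ∀ x, 0 < μx x := hsupp
  have hq0 : ∀ x a, 0 ≤ q x a := fun x a => by
    have h1 := hμpos x
    have h2 := hρ0 a; have h3 := hνa0 a x
    rw [hq]
    positivity
  have hq1 : ∀ x, ∑ a, q x a = 1 := fun x => by
    simp only [hq]
    rw [← Finset.sum_div]
    exact div_self (hμpos x).ne'
  -- empirical distribution notation
  set E : (Fin m → Fin k) → ℝ := fun as =>
    Real.exp (l * klDiv (fun a => (m : ℝ)⁻¹ * ∑ j, if as j = a then (1:ℝ) else 0) ρ)
    with hE
  -- step 1: per-xs Jensen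
  have step1 : ∀ xs : Fin m → Ω,
      Real.exp (l * klDiv (fun a => (m : ℝ)⁻¹ * ∑ j, q (xs j) a) ρ)
        ≤ ∑ as : Fin m → Fin k, (∏ j, q (xs j) (as j)) * E as := by
    intro xs
    have hw0 : ∀ as : Fin m → Fin k, 0 ≤ ∏ j, q (xs j) (as j) := fun as =>
      Finset.prod_nonneg fun j _ => hq0 _ _
    have hw1 : ∑ as : Fin m → Fin k, ∏ j, q (xs j) (as j) = 1 := by
      rw [← Fintype.piFinset_univ, ← Finset.prod_univ_sum]
      simp [hq1]
    have hcenter : ∀ a, (m : ℝ)⁻¹ * ∑ j, q (xs j) a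
        = ∑ as : Fin m → Fin k, (∏ j, q (xs j) (as j)) *
            ((m : ℝ)⁻¹ * ∑ j, if as j = a then (1:ℝ) else 0) := by
      intro a
      have swap : ∑ as : Fin m → Fin k, (∏ j, q (xs j) (as j)) *
            (∑ j, if as j = a then (1:ℝ) else 0)
          = ∑ j, q (xs j) a := by
        calc ∑ as : Fin m → Fin k, (∏ j, q (xs j) (as j)) *
              (∑ j, if as j = a then (1:ℝ) else 0)
            = ∑ as : Fin m → Fin k, ∑ j, (∏ j', q (xs j') (as j')) *
                (if as j = a then (1:ℝ) else 0) := by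
              apply Finset.sum_congr rfl; intro as _; rw [Finset.mul_sum]
          _ = ∑ j, ∑ as : Fin m → Fin k, (∏ j', q (xs j') (as j')) *
                (if as j = a then (1:ℝ) else 0) := Finset.sum_comm
          _ = ∑ j : Fin m, q (xs j) a := by
              apply Finset.sum_congr rfl
              intro j _
              set F : Fin m → Fin k → ℝ := fun j' b => q (xs j') b *
                  (if j' = j then (if b = a then (1:ℝ) else 0) else 1) with hF
              have key : ∀ as : Fin m → Fin k, (∏ j', q (xs j') (as j')) *
                  (if as j = a then (1:ℝ) else 0) = ∏ j', F j' (as j') := by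
                intro as
                simp only [hF]
                rw [Finset.prod_mul_distrib]
                congr 1
                rw [Finset.prod_ite_eq' Finset.univ j
                  (fun j' => if as j' = a then (1:ℝ) else 0)]
                simp
              calc ∑ as : Fin m → Fin k, (∏ j', q (xs j') (as j')) *
                    (if as j = a then (1:ℝ) else 0)
                  = ∑ as ∈ Fintype.piFinset (fun _ : Fin m => (Finset.univ : Finset (Fin k))),
                      ∏ j', F j' (as j') := by
                    rw [Fintype.piFinset_univ]
                    exact Finset.sum_congr rfl fun as _ => key as
                _ = ∏ j', ∑ b, F j' b := Finset.sum_prod_piFinset Finset.univ F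
                _ = q (xs j) a := by
                    rw [Finset.prod_eq_single j]
                    · simp only [hF, if_pos rfl, mul_ite, mul_one, mul_zero]
                      simp [Finset.sum_ite_eq' Finset.univ a (fun b => q (xs j) b)]
                    · intro j' _ hj'
                      simp [hF, hj', hq1 (xs j')]
                    · simp
      rw [← swap, Finset.mul_sum]
      apply Finset.sum_congr rfl
      intros; ring
    have hjensen := jensen_exp_klDiv ρ hρ0
      (fun as : Fin m → Fin k => ∏ j, q (xs j) (as j))
      (fun as a => (m : ℝ)⁻¹ * ∑ j, if as j = a then (1:ℝ) else 0)
      hw0 hw1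
      (fun as hw a => by
        constructor
        · have h0 : (0:ℝ) ≤ ∑ j, if as j = a then (1:ℝ) else 0 :=
            Finset.sum_nonneg fun j _ => by positivity
          positivity
        · intro hρa
          have hne : ∀ j, as j ≠ a := by
            intro j hj
            apply hw
            apply Finset.prod_eq_zero (Finset.mem_univ j)
            rw [hj]
            simp [hq, hρa]
          simp [hne])
      l hl0
    beta_reduce at hjensen
    have hfun : (fun a => ∑ as : Fin m → Fin k, (∏ j, q (xs j) (as j)) *
          ((m : ℝ)⁻¹ * ∑ j, if as j = a then (1:ℝ) else 0))
        = fun a => (m : ℝ)⁻¹ * ∑ j, q (xs j) a :=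
      funext fun a => (hcenter a).symm
    rw [hfun] at hjensen
    simpa only [hE] using hjensen
  -- main chain
  have main : ∑ xs : Fin m → Ω, (∏ j, μx (xs j)) *
      Real.exp (l * klDiv (fun a => (m : ℝ)⁻¹ * ∑ j, q (xs j) a) ρ)
      ≤ (1 - l / m)⁻¹ ^ (k - 1) := by
    calc ∑ xs : Fin m → Ω, (∏ j, μx (xs j)) *
          Real.exp (l * klDiv (fun a => (m : ℝ)⁻¹ * ∑ j, q (xs j) a) ρ)
        ≤ ∑ xs : Fin m → Ω, (∏ j, μx (xs j)) *
            ∑ as : Fin m → Fin k, (∏ j, q (xs j) (as j)) * E as := by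
          apply Finset.sum_le_sum
          intro xs _
          exact mul_le_mul_of_nonneg_left (step1 xs)
            (Finset.prod_nonneg fun j _ => (hμpos (xs j)).le)
      _ = ∑ xs : Fin m → Ω, ∑ as : Fin m → Fin k,
            (∏ j, ρ (as j) * νa (as j) (xs j)) * E as := by
          apply Finset.sum_congr rfl
          intro xs _
          rw [Finset.mul_sum]
          apply Finset.sum_congr rfl
          intro as _
          rw [← mul_assoc, ← Finset.prod_mul_distrib]
          congr 1
          apply Finset.prod_congr rfl
          intro j _
          rw [hq]
          rw [mul_comm, div_mul_cancel₀ _ (hμpos (xs j)).ne']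
      _ = ∑ as : Fin m → Fin k, ∑ xs : Fin m → Ω,
            (∏ j, ρ (as j) * νa (as j) (xs j)) * E as := Finset.sum_comm
      _ = ∑ as : Fin m → Fin k, (∏ j, ρ (as j)) * E as := by
          apply Finset.sum_congr rfl
          intro as _
          rw [← Finset.sum_mul]
          congr 1
          calc ∑ xs : Fin m → Ω, ∏ j, ρ (as j) * νa (as j) (xs j)
              = ∏ j, ∑ x : Ω, ρ (as j) * νa (as j) x := by
                rw [← Fintype.piFinset_univ]
                exact Finset.sum_prod_piFinset Finset.univ
                  (fun j x => ρ (as j) * νa (as j) x)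
            _ = ∏ j, ρ (as j) := by
                apply Finset.prod_congr rfl
                intro j _
                rw [← Finset.mul_sum, hνa1, mul_one]
      _ ≤ (1 - l / m)⁻¹ ^ (k - 1) := hAgrawal
  simp only [hμx, hq, hE] at main
  exact main
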